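/- arXiv:2210.04124 — 6 statements merged into one kernel-verified Lean document; each statement's English description precedes it below -/
import Mathlib

section
/- Let Â be a symmetric n×n real matrix, and let {W_k}_{k=0}^m be n×n matrices with Σ_k W_kᵀW_k = Iₙ, each of the form W_k = Uᵀ D_k U with D_k diagonal, where Â = Uᵀ(I-Λ)U for diagonal Λ and orthogonal U. If all feature weight matrices are equal, W ∈ ℝ^{c×c}, then the framelet convolution update Σ_k W_kᵀ Â W_k H W equals Â H W for all H ∈ ℝ^{n×c}. -/
open Matrix

lemma diag_sum_aux {n : ℕ} {m : ℕ} (f : Fin m → Fin n → ℝ) :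
    ∑ k, Matrix.diagonal (f k) = Matrix.diagonal (fun i => ∑ k, f k i) := by
  ext i j
  simp [Matrix.sum_apply, Matrix.diagonal_apply]

lemma conj_mul_aux {n : ℕ} (U : Matrix (Fin n) (Fin n) ℝ) (hU' : U * Uᵀ = 1)
    (f g : Fin n → ℝ) :
    (Uᵀ * Matrix.diagonal f * U) * (Uᵀ * Matrix.diagonal g * U)
      = Uᵀ * Matrix.diagonal (fun i => f i * g i) * U := by
  calc (Uᵀ * Matrix.diagonal f * U) * (Uᵀ * Matrix.diagonal g * U)
      = Uᵀ * (Matrix.diagonal f * ((U * Uᵀ) * (Matrix.diagonal g * U))) := by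
        simp only [Matrix.mul_assoc]
    _ = Uᵀ * (Matrix.diagonal f * Matrix.diagonal g) * U := by
        rw [hU', Matrix.one_mul]; simp only [Matrix.mul_assoc]
    _ = Uᵀ * Matrix.diagonal (fun i => f i * g i) * U := by
        rw [Matrix.diagonal_mul_diagonal]

/-- When all feature weight matrices coincide, the framelet convolution update
collapses to the ordinary GCN update `Â H W`. -/
theorem framelet_conv_collapse (n c m : ℕ)
    (Ahat : Matrix (Fin n) (Fin n) ℝ) (hA : Ahat.IsSymm)
    (U : Matrix (Fin n) (Fin n) ℝ) (hU : Uᵀ * U = 1) (hU' : U * Uᵀ = 1)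
    (Λ : Fin n → ℝ)
    (hAdiag : Ahat = Uᵀ * Matrix.diagonal (fun i => 1 - Λ i) * U)
    (W : Fin (m + 1) → Matrix (Fin n) (Fin n) ℝ)
    (D : Fin (m + 1) → Fin n → ℝ)
    (hW : ∀ k, W k = Uᵀ * Matrix.diagonal (D k) * U)
    (htight : ∑ k, (W k)ᵀ * W k = 1)
    (Wc : Matrix (Fin c) (Fin c) ℝ) (H : Matrix (Fin n) (Fin c) ℝ) :
    ∑ k, (W k)ᵀ * Ahat * W k * H * Wc = Ahat * H * Wc := by
  have hWT : ∀ k, (W k)ᵀ = Uᵀ * Matrix.diagonal (D k) * U := by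
    intro k
    rw [hW]
    simp [Matrix.transpose_mul, Matrix.mul_assoc]
  have hWk : ∀ k, (W k)ᵀ * Ahat * W k
      = Uᵀ * Matrix.diagonal (fun i => (1 - Λ i) * (D k i * D k i)) * U := by
    intro k
    have hfun : (fun i => D k i * (1 - Λ i) * D k i)
        = fun i => (1 - Λ i) * (D k i * D k i) := by funext i; ring
    rw [hWT, hAdiag, hW, conj_mul_aux U hU', conj_mul_aux U hU', hfun]
  have hDsum : Matrix.diagonal (fun i => ∑ k, D k i * D k i)
      = (1 : Matrix (Fin n) (Fin n) ℝ) := by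
    have h1 : ∑ k, (W k)ᵀ * W k
        = Uᵀ * Matrix.diagonal (fun i => ∑ k, D k i * D k i) * U := by
      rw [Finset.sum_congr rfl (fun k _ => by
        rw [hWT, hW, conj_mul_aux U hU'])]
      rw [show (∑ k, Uᵀ * Matrix.diagonal (fun i => D k i * D k i) * U)
          = Uᵀ * (∑ k, Matrix.diagonal (fun i => D k i * D k i)) * U by
        simp only [Finset.mul_sum, Finset.sum_mul]]
      rw [diag_sum_aux]
    have h2 : Uᵀ * Matrix.diagonal (fun i => ∑ k, D k i * D k i) * U = 1 := by
      rw [← h1, htight]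
    calc Matrix.diagonal (fun i => ∑ k, D k i * D k i)
        = U * (Uᵀ * Matrix.diagonal (fun i => ∑ k, D k i * D k i) * U) * Uᵀ := by
          simp only [Matrix.mul_assoc]
          rw [show Matrix.diagonal (fun i => ∑ k, D k i * D k i) * (U * Uᵀ)
            = Matrix.diagonal (fun i => ∑ k, D k i * D k i) * 1 by rw [hU']]
          rw [Matrix.mul_one, ← Matrix.mul_assoc, hU', Matrix.one_mul]
      _ = 1 := by rw [h2, Matrix.mul_one, hU']
  have key : ∑ k, (W k)ᵀ * Ahat * W k = Ahat := by
    rw [Finset.sum_congr rfl (fun k _ => hWk k)]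
    rw [show (∑ k, Uᵀ * Matrix.diagonal (fun i => (1 - Λ i) * (D k i * D k i)) * U)
        = Uᵀ * (∑ k, Matrix.diagonal (fun i => (1 - Λ i) * (D k i * D k i))) * U by
      simp only [Finset.mul_sum, Finset.sum_mul]]
    rw [diag_sum_aux]
    have hfun : (fun i => ∑ k, (1 - Λ i) * (D k i * D k i))
        = fun i => (1 - Λ i) * ∑ k, D k i * D k i := by
      funext i; rw [Finset.mul_sum]
    rw [hfun, show (Matrix.diagonal fun i => (1 - Λ i) * ∑ k, D k i * D k i)
        = Matrix.diagonal (fun i => 1 - Λ i)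
          * Matrix.diagonal (fun i => ∑ k, D k i * D k i) by
      rw [Matrix.diagonal_mul_diagonal]]
    rw [hDsum, Matrix.mul_one, hAdiag, Matrix.mul_assoc]
  calc ∑ k, (W k)ᵀ * Ahat * W k * H * Wc
      = (∑ k, (W k)ᵀ * Ahat * W k) * H * Wc := by
        rw [Matrix.sum_mul, Matrix.sum_mul]
    _ = Ahat * H * Wc := by rw [key]
end

section
/- For any λ^W with |λ^W| ≤ 1, the function g(λ) = |cos²(λ/8) + λ^W sin²(λ/8)| · |1 − λ| on [0,2] satisfies g(λ) ≤ g(0) = 1 for all λ ∈ [0,2]; moreover cos²(λ/8) + λ^W sin²(λ/8) ∈ (0,1] and is non-increasing in λ on [0,2]. -/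
/-- For `|λ^W| ≤ 1`, the per-layer amplification magnitude
`g(λ) = |cos²(λ/8) + λ^W sin²(λ/8)|·|1−λ|` is maximized at `λ = 0` with `g(0) = 1`,
and `cos²(λ/8) + λ^W sin²(λ/8) ∈ (0,1]` is non-increasing on `[0,2]`. -/
theorem haar_lfd_amplification (lW : ℝ) (hlW : |lW| ≤ 1)
    (g h : ℝ → ℝ)
    (hg : ∀ l, g l = |Real.cos (l / 8) ^ 2 + lW * Real.sin (l / 8) ^ 2| * |1 - l|)
    (hh : ∀ l, h l = Real.cos (l / 8) ^ 2 + lW * Real.sin (l / 8) ^ 2) :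
    g 0 = 1 ∧
    (∀ l ∈ Set.Icc (0 : ℝ) 2, g l ≤ g 0) ∧
    (∀ l ∈ Set.Icc (0 : ℝ) 2, h l ∈ Set.Ioc (0 : ℝ) 1) ∧
    AntitoneOn h (Set.Icc (0 : ℝ) 2) := by
  obtain ⟨hl1, hl2⟩ := abs_le.mp hlW
  have hpi := Real.pi_gt_three
  have hg0 : g 0 = 1 := by simp [hg]
  have hmem : ∀ l ∈ Set.Icc (0 : ℝ) 2, h l ∈ Set.Ioc (0 : ℝ) 1 := by
    rintro l ⟨h0, h2⟩
    rw [hh]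
    constructor
    · have key : Real.cos (l / 8) ^ 2 - Real.sin (l / 8) ^ 2
          ≤ Real.cos (l / 8) ^ 2 + lW * Real.sin (l / 8) ^ 2 := by
        nlinarith [sq_nonneg (Real.sin (l / 8))]
      have hcos : Real.cos (l / 8) ^ 2 - Real.sin (l / 8) ^ 2 = Real.cos (2 * (l / 8)) := by
        have := Real.cos_two_mul (l / 8)
        have := Real.sin_sq_add_cos_sq (l / 8)
        linarith
      have hpos : 0 < Real.cos (2 * (l / 8)) := by
        apply Real.cos_pos_of_mem_Ioo
        constructor <;> [linarith; nlinarith]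
      linarith
    · nlinarith [Real.sin_sq_add_cos_sq (l / 8), sq_nonneg (Real.sin (l / 8))]
  refine ⟨hg0, ?_, hmem, ?_⟩
  · rintro l hl
    obtain ⟨hp, hle⟩ := hmem l hl
    obtain ⟨h0, h2⟩ := hl
    rw [hg0, hg]
    have h1 : |Real.cos (l / 8) ^ 2 + lW * Real.sin (l / 8) ^ 2| ≤ 1 := by
      rw [← hh]; rw [abs_le]; constructor <;> linarith
    have h2' : |1 - l| ≤ 1 := by rw [abs_le]; constructor <;> linarith
    calc |Real.cos (l / 8) ^ 2 + lW * Real.sin (l / 8) ^ 2| * |1 - l|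
        ≤ 1 * 1 := by
          apply mul_le_mul h1 h2' (abs_nonneg _) zero_le_one
      _ = 1 := by ring
  · rintro a ⟨ha0, ha2⟩ b ⟨hb0, hb2⟩ hab
    rw [hh, hh]
    have hsin : Real.sin (a / 8) ≤ Real.sin (b / 8) := by
      apply Real.sin_le_sin_of_le_of_le_pi_div_two <;> nlinarith
    have hsa : 0 ≤ Real.sin (a / 8) := Real.sin_nonneg_of_nonneg_of_le_pi (by linarith) (by nlinarith)
    have hsq : Real.sin (a / 8) ^ 2 ≤ Real.sin (b / 8) ^ 2 := by nlinarith
    have hca : Real.cos (a / 8) ^ 2 = 1 - Real.sin (a / 8) ^ 2 := by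
      nlinarith [Real.sin_sq_add_cos_sq (a / 8)]
    have hcb : Real.cos (b / 8) ^ 2 = 1 - Real.sin (b / 8) ^ 2 := by
      nlinarith [Real.sin_sq_add_cos_sq (b / 8)]
    rw [hca, hcb]
    nlinarith
end

section
/- Let L̂ be a symmetric positive semidefinite n×n matrix with eigenvalues in [0, ρ] with ρ > 0, and let Δ be a symmetric matrix commuting with L̂ with nonnegative eigenvalues such that for every eigenvalue λ_i of L̂ with λ_i > 0, the corresponding eigenvalue δ_i of Δ satisfies λ_i + ε δ_i ≥ ϑ for some ϑ > 0. Let H(t) solve Ḣ(t) = −(L̂ + εΔ)H(t) with H(0) = H₀ ∈ ℝ^{n×c}. Then the Dirichlet energy satisfies E(H(t)) = (1/2)tr(H(t)ᵀ L̂ H(t)) ≤ (ρ/2) e^{−2tϑ} ‖H₀‖² for all t ≥ 0, and in particular E(H(t)) → 0 as t → ∞. -/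
open Matrix

/-- Scalar linear ODE: if `f' = -μ f` everywhere then `f t = f 0 * exp (-μ t)`. -/
lemma scalar_ode_decay (μ : ℝ) (f : ℝ → ℝ)
    (hf : ∀ t, HasDerivAt f (-(μ * f t)) t) :
    ∀ t, f t = f 0 * Real.exp (-(μ * t)) := by
  have key : ∀ t, f t * Real.exp (μ * t) = f 0 := by
    have hg : ∀ t, HasDerivAt (fun s => f s * Real.exp (μ * s)) 0 t := by
      intro t
      have hinner : HasDerivAt (fun s : ℝ => μ * s) (μ * 1) t :=
        (hasDerivAt_id t).const_mul μ
      have hexp : HasDerivAt (fun s : ℝ => Real.exp (μ * s))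
          (Real.exp (μ * t) * (μ * 1)) t := hinner.exp
      have := (hf t).fun_mul hexp
      rw [show -(μ * f t) * Real.exp (μ * t) + f t * (Real.exp (μ * t) * (μ * 1)) = 0 by ring] at this
      exact this
    intro t
    have hconst := is_const_of_deriv_eq_zero
      (fun x => (hg x).differentiableAt) (fun x => (hg x).deriv) t 0
    simpa using hconst
  intro t
  have h := key t
  have hne : Real.exp (μ * t) ≠ 0 := (Real.exp_pos _).ne'
  have : f t = f 0 / Real.exp (μ * t) := by
    field_simp at h ⊢
    linarith [h]
  rw [this, Real.exp_neg, div_eq_mul_inv]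

/-- The gradient flow of the perturbed framelet energy,
`Ḣ(t) = −(L̂ + εΔ)H(t)`, has exponentially decaying Dirichlet energy:
`E(H(t)) ≤ (ρ/2) e^{−2tϑ} ‖H₀‖²_F`, hence `E(H(t)) → 0`. -/
theorem perturbed_gradient_flow_is_LFD (n c : ℕ)
    (L Δ U : Matrix (Fin n) (Fin n) ℝ)
    (hU : Uᵀ * U = 1) (hU' : U * Uᵀ = 1)
    (lam δ : Fin n → ℝ) (ρ ε ϑ : ℝ) (hρ : 0 < ρ)
    (hL : L = Uᵀ * Matrix.diagonal lam * U)
    (hΔ : Δ = Uᵀ * Matrix.diagonal δ * U)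
    (hlam : ∀ i, lam i ∈ Set.Icc 0 ρ) (hδ : ∀ i, 0 ≤ δ i)
    (hε : 0 ≤ ε) (hϑ : 0 < ϑ)
    (hgap : ∀ i, 0 < lam i → ϑ ≤ lam i + ε * δ i)
    (H : ℝ → Matrix (Fin n) (Fin c) ℝ)
    (hderiv : ∀ t i k, HasDerivAt (fun s => H s i k) ((-((L + ε • Δ) * H t)) i k) t)
    (E : Matrix (Fin n) (Fin c) ℝ → ℝ)
    (hE : ∀ X, E X = (1 / 2) * (Xᵀ * L * X).trace) :
    (∀ t : ℝ, 0 ≤ t →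
      E (H t) ≤ (ρ / 2) * Real.exp (-2 * t * ϑ) * ∑ i, ∑ k, (H 0 i k) ^ 2) ∧
    Filter.Tendsto (fun t => E (H t)) Filter.atTop (nhds 0) := by
  set μ : Fin n → ℝ := fun i => lam i + ε * δ i with hμ
  set G : ℝ → Matrix (Fin n) (Fin c) ℝ := fun t => U * H t with hG
  -- diagonalize the generator
  have hUM : U * (L + ε • Δ) = Matrix.diagonal μ * U := by
    rw [hL, hΔ, hμ]
    rw [Matrix.mul_add, Matrix.mul_smul]
    rw [show Uᵀ * Matrix.diagonal lam * U = Uᵀ * (Matrix.diagonal lam * U) from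
      Matrix.mul_assoc _ _ _,
      show Uᵀ * Matrix.diagonal δ * U = Uᵀ * (Matrix.diagonal δ * U) from
      Matrix.mul_assoc _ _ _,
      ← Matrix.mul_assoc U Uᵀ, ← Matrix.mul_assoc U Uᵀ, hU', one_mul, one_mul]
    rw [← Matrix.smul_mul, ← Matrix.add_mul]
    have hd : Matrix.diagonal lam + ε • Matrix.diagonal δ
        = Matrix.diagonal (fun i => lam i + ε * δ i) := by
      ext i j
      by_cases h : i = j <;> simp [Matrix.diagonal_apply, h]
    rw [hd]
  -- entrywise derivative of G
  have hGderiv : ∀ t i k, HasDerivAt (fun s => G s i k) (-(μ i * G t i k)) t := by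
    intro t i k
    have hsum : HasDerivAt (fun s => ∑ j, U i j * H s j k)
        (∑ j, U i j * (-((L + ε • Δ) * H t)) j k) t :=
      HasDerivAt.fun_sum (fun j _ => (hderiv t j k).const_mul (U i j))
    have heq1 : (fun s => ∑ j, U i j * H s j k) = fun s => G s i k := by
      funext s; simp [hG, Matrix.mul_apply]
    have heq2 : (∑ j, U i j * (-((L + ε • Δ) * H t)) j k) = -(μ i * G t i k) := by
      have : (∑ j, U i j * (-((L + ε • Δ) * H t)) j k)
          = (U * (-((L + ε • Δ) * H t))) i k := by simp [Matrix.mul_apply]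
      rw [this, Matrix.mul_neg, ← Matrix.mul_assoc, hUM, Matrix.mul_assoc]
      simp [Matrix.diagonal_mul, hG]
    rw [heq1, heq2] at hsum
    exact hsum
  -- explicit solution
  have hGsol : ∀ t i k, G t i k = G 0 i k * Real.exp (-(μ i * t)) := by
    intro t i k
    exact scalar_ode_decay (μ i) (fun s => G s i k) (fun s => hGderiv s i k) t
  -- trace formula
  have htr : ∀ t, ((H t)ᵀ * L * H t).trace = ∑ i, lam i * ∑ k, (G t i k) ^ 2 := by
    intro t
    have hfact : (H t)ᵀ * L * H t = (G t)ᵀ * (Matrix.diagonal lam * G t) := by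
      rw [hL, hG]
      simp only [Matrix.transpose_mul]
      rw [Matrix.mul_assoc, Matrix.mul_assoc, Matrix.mul_assoc, Matrix.mul_assoc]
    rw [hfact, Matrix.trace]
    simp only [Matrix.diag, Matrix.mul_apply, Matrix.diagonal_mul, Matrix.transpose_apply]
    rw [Finset.sum_comm]
    refine Finset.sum_congr rfl fun i _ => ?_
    rw [Finset.mul_sum]
    refine Finset.sum_congr rfl fun k _ => ?_
    simp only [Matrix.diagonal_apply, ite_mul, zero_mul, Finset.sum_ite_eq,
      Finset.mem_univ, if_true]
    ring
  -- Frobenius norm preserved: ∑ G0² = ∑ H0²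
  have hnorm : ∑ i, ∑ k, (G 0 i k) ^ 2 = ∑ i, ∑ k, (H 0 i k) ^ 2 := by
    have h1 : ∀ (B : Matrix (Fin n) (Fin c) ℝ),
        (Bᵀ * B).trace = ∑ i, ∑ k, (B i k) ^ 2 := by
      intro B
      rw [Matrix.trace]
      simp only [Matrix.diag, Matrix.mul_apply, Matrix.transpose_apply]
      rw [Finset.sum_comm]
      refine Finset.sum_congr rfl fun i _ => ?_
      refine Finset.sum_congr rfl fun k _ => ?_
      ring
    have h2 : (G 0)ᵀ * G 0 = (H 0)ᵀ * H 0 := by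
      rw [hG]
      simp only [Matrix.transpose_mul]
      rw [Matrix.mul_assoc, ← Matrix.mul_assoc Uᵀ U, hU, Matrix.one_mul]
    rw [← h1, h2, h1]
  have hEformula : ∀ t, E (H t) = (1 / 2) * ∑ i, lam i * ∑ k, (G t i k) ^ 2 := by
    intro t; rw [hE, htr]
  -- nonnegativity of E
  have hEnonneg : ∀ t, 0 ≤ E (H t) := by
    intro t
    rw [hEformula]
    apply mul_nonneg (by norm_num)
    apply Finset.sum_nonneg
    intro i _
    exact mul_nonneg (hlam i).1 (Finset.sum_nonneg fun k _ => sq_nonneg _)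
  -- main bound
  have hbound : ∀ t : ℝ, 0 ≤ t →
      E (H t) ≤ (ρ / 2) * Real.exp (-2 * t * ϑ) * ∑ i, ∑ k, (H 0 i k) ^ 2 := by
    intro t ht
    rw [hEformula, ← hnorm]
    have hi : ∀ i, lam i * ∑ k, (G t i k) ^ 2
        ≤ ρ * Real.exp (-2 * t * ϑ) * ∑ k, (G 0 i k) ^ 2 := by
      intro i
      rcases eq_or_lt_of_le (hlam i).1 with h0 | hpos
      · rw [← h0, zero_mul]
        apply mul_nonneg (mul_nonneg hρ.le (Real.exp_pos _).le)
        exact Finset.sum_nonneg fun k _ => sq_nonneg _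
      · have hμϑ : ϑ ≤ μ i := hgap i hpos
        have hsum : ∑ k, (G t i k) ^ 2
            ≤ Real.exp (-2 * t * ϑ) * ∑ k, (G 0 i k) ^ 2 := by
          rw [Finset.mul_sum]
          apply Finset.sum_le_sum
          intro k _
          rw [hGsol t i k, mul_pow, ← Real.exp_nat_mul]
          have hexple : Real.exp ((2 : ℕ) * -(μ i * t)) ≤ Real.exp (-2 * t * ϑ) := by
            apply Real.exp_le_exp.mpr
            push_cast
            nlinarith
          calc (G 0 i k) ^ 2 * Real.exp ((2 : ℕ) * -(μ i * t))
              ≤ (G 0 i k) ^ 2 * Real.exp (-2 * t * ϑ) :=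
                mul_le_mul_of_nonneg_left hexple (sq_nonneg _)
            _ = Real.exp (-2 * t * ϑ) * (G 0 i k) ^ 2 := mul_comm _ _
        calc lam i * ∑ k, (G t i k) ^ 2
            ≤ lam i * (Real.exp (-2 * t * ϑ) * ∑ k, (G 0 i k) ^ 2) :=
              mul_le_mul_of_nonneg_left hsum (hlam i).1
          _ ≤ ρ * (Real.exp (-2 * t * ϑ) * ∑ k, (G 0 i k) ^ 2) := by
              apply mul_le_mul_of_nonneg_right (hlam i).2
              exact mul_nonneg (Real.exp_pos _).le
                (Finset.sum_nonneg fun k _ => sq_nonneg _)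
          _ = ρ * Real.exp (-2 * t * ϑ) * ∑ k, (G 0 i k) ^ 2 := by ring
    calc (1 / 2) * ∑ i, lam i * ∑ k, (G t i k) ^ 2
        ≤ (1 / 2) * ∑ i, ρ * Real.exp (-2 * t * ϑ) * ∑ k, (G 0 i k) ^ 2 := by
          apply mul_le_mul_of_nonneg_left _ (by norm_num)
          exact Finset.sum_le_sum fun i _ => hi i
      _ = (ρ / 2) * Real.exp (-2 * t * ϑ) * ∑ i, ∑ k, (G 0 i k) ^ 2 := by
          rw [Finset.mul_sum, Finset.mul_sum]
          congr 1; funext i; ring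
  refine ⟨hbound, ?_⟩
  -- convergence to zero by squeezing
  have hbd_tendsto : Filter.Tendsto
      (fun t => (ρ / 2) * Real.exp (-2 * t * ϑ) * ∑ i, ∑ k, (H 0 i k) ^ 2)
      Filter.atTop (nhds 0) := by
    have h1 : Filter.Tendsto (fun t : ℝ => -2 * t * ϑ) Filter.atTop Filter.atBot := by
      have : Filter.Tendsto (fun t : ℝ => (-2 * ϑ) * t) Filter.atTop Filter.atBot :=
        Filter.Tendsto.const_mul_atTop_of_neg (by linarith) Filter.tendsto_id
      convert this using 2 with t
      ring
    have h2 : Filter.Tendsto (fun t : ℝ => Real.exp (-2 * t * ϑ))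
        Filter.atTop (nhds 0) := Real.tendsto_exp_atBot.comp h1
    have h3 := (h2.const_mul (ρ / 2)).mul_const (∑ i, ∑ k, (H 0 i k) ^ 2)
    simpa using h3
  apply squeeze_zero' (Filter.Eventually.of_forall hEnonneg) _ hbd_tendsto
  filter_upwards [Filter.eventually_ge_atTop (0 : ℝ)] with t ht
  exact hbound t ht
end

section
/- For all λ ∈ [0,2], the Haar two-scale energy gap δ(λ) = cos²(λ/8)cos²(λ/16) − sin²(λ/8)cos²(λ/16) − sin²(λ/16) is nonnegative. -/
/-- Nonnegativity of the two-scale Haar energy gap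
`δ(λ) = cos²(λ/8)cos²(λ/16) − sin²(λ/8)cos²(λ/16) − sin²(λ/16)` on `[0,2]`. -/
theorem haar_two_scale_energy_gap_nonneg :
    ∀ l ∈ Set.Icc (0 : ℝ) 2,
      0 ≤ Real.cos (l / 8) ^ 2 * Real.cos (l / 16) ^ 2
          - Real.sin (l / 8) ^ 2 * Real.cos (l / 16) ^ 2
          - Real.sin (l / 16) ^ 2 := by
  rintro l ⟨h0, h2⟩
  have key : Real.cos (l/8) ^ 2 - Real.sin (l/8) ^ 2 = Real.cos (l/4) := by
    rw [show l/4 = 2*(l/8) by ring, Real.cos_two_mul, Real.sin_sq]; ring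
  have hc4 : 1 - (l/4)^2/2 ≤ Real.cos (l/4) := Real.one_sub_sq_div_two_le_cos
  have hc16 : 1 - (l/16)^2/2 ≤ Real.cos (l/16) := Real.one_sub_sq_div_two_le_cos
  have hs16 : Real.sin (l/16) ≤ l/16 := Real.sin_le (by linarith)
  have hs16' : 0 ≤ Real.sin (l/16) := Real.sin_nonneg_of_nonneg_of_le_pi (by linarith)
    (by nlinarith [Real.pi_gt_three])
  have hpos16 : (0:ℝ) < 1 - (l/16)^2/2 := by nlinarith
  have hcos16nn : 0 ≤ Real.cos (l/16) := Real.cos_nonneg_of_mem_Icc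
    ⟨by nlinarith [Real.pi_gt_three], by nlinarith [Real.pi_gt_three]⟩
  have h1 : (1 - (l/16)^2/2)^2 ≤ Real.cos (l/16) ^ 2 :=
    pow_le_pow_left₀ (le_of_lt hpos16) hc16 2
  have h2' : Real.sin (l/16) ^ 2 ≤ (l/16)^2 := by
    rw [sq, sq]; exact mul_self_le_mul_self hs16' hs16
  have hc4pos : (0:ℝ) < 1 - (l/4)^2/2 := by nlinarith
  calc (0:ℝ) ≤ (1 - (l/4)^2/2) * (1 - (l/16)^2/2)^2 - (l/16)^2 := by nlinarith [sq_nonneg l, sq_nonneg (l*l), mul_nonneg h0 h0, mul_nonneg (mul_nonneg h0 h0) h0, mul_nonneg (mul_nonneg (mul_nonneg h0 h0) h0) h0, sq_nonneg (2-l)]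
    _ ≤ Real.cos (l/4) * Real.cos (l/16)^2 - Real.sin (l/16)^2 := by
        have := mul_le_mul hc4 h1 (by positivity) (le_trans (le_of_lt hc4pos) hc4)
        linarith
    _ = Real.cos (l / 8) ^ 2 * Real.cos (l / 16) ^ 2
          - Real.sin (l / 8) ^ 2 * Real.cos (l / 16) ^ 2
          - Real.sin (l / 16) ^ 2 := by rw [← key]; ring
end

section
/- Let Â = Uᵀ(I−Λ)U be symmetric with Λ diagonal, λ_i ∈ [0,2], and let W₀ = Uᵀcos(Λ/8)U, W₁ = Uᵀsin(Λ/8)U be the one-scale Haar framelet transforms. For feature weights W₀' = I_c and W₁' = λ^W I_c, the vectorized layer map T = W₀' ⊗ W₀ᵀÂW₀ + W₁' ⊗ W₁ᵀÂW₁ has eigenvalues (cos²(λ_i/8) + λ^W sin²(λ_i/8))(1 − λ_i), each with multiplicity c, with eigenvectors e_k ⊗ u_i. -/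
open Matrix Kronecker

lemma kron_mulVec {m n : Type*} [Fintype m] [Fintype n] [DecidableEq m] [DecidableEq n]
    (A : Matrix m m ℝ) (B : Matrix n n ℝ) (f : m → ℝ) (g : n → ℝ) :
    (A ⊗ₖ B).mulVec (fun p => f p.1 * g p.2)
      = fun p => (A.mulVec f p.1) * (B.mulVec g p.2) := by
  funext p
  simp only [Matrix.mulVec, dotProduct, kroneckerMap_apply, Fintype.sum_prod_type]
  rw [Finset.sum_mul_sum]
  refine Finset.sum_congr rfl fun a _ => Finset.sum_congr rfl fun b _ => by ring

lemma single_mulVec {n : ℕ} (U : Matrix (Fin n) (Fin n) ℝ) (i : Fin n) (x : ℝ) :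
    U.mulVec (Pi.single i x) = fun j => U j i * x := by
  funext j
  simp [Matrix.mulVec, dotProduct, Pi.single_apply]

lemma eig {n : ℕ} (U : Matrix (Fin n) (Fin n) ℝ) (hU' : U * Uᵀ = 1)
    (d : Fin n → ℝ) (i : Fin n) :
    (Uᵀ * Matrix.diagonal d * U).mulVec (fun j => U i j)
      = fun j => d i * U i j := by
  have hv : (fun j => U i j) = Uᵀ.mulVec (Pi.single i 1) := by
    rw [single_mulVec]
    funext j; simp [Matrix.transpose_apply]
  rw [hv, Matrix.mulVec_mulVec]
  have h2 : Uᵀ * Matrix.diagonal d * U * Uᵀ = Uᵀ * Matrix.diagonal d := by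
    rw [Matrix.mul_assoc, hU', Matrix.mul_one]
  rw [h2, ← Matrix.mulVec_mulVec]
  have hD : (Matrix.diagonal d).mulVec (Pi.single i 1) = Pi.single i (d i) := by
    funext j
    by_cases h : j = i <;> simp [Matrix.mulVec_diagonal, Pi.single_apply, h]
  rw [hD, single_mulVec]
  funext j
  simp [Matrix.transpose_apply, mul_comm]

lemma conjSandwichMul {n : ℕ} (U : Matrix (Fin n) (Fin n) ℝ) (hU' : U * Uᵀ = 1)
    (X Y : Matrix (Fin n) (Fin n) ℝ) :
    (Uᵀ * X * U) * (Uᵀ * Y * U) = Uᵀ * (X * Y) * U := by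
  simp only [Matrix.mul_assoc]
  rw [← Matrix.mul_assoc U Uᵀ (Y * U), hU', Matrix.one_mul]

/-- Spectrum of the vectorized one-scale Haar framelet layer: with weights
`W₀' = I_c`, `W₁' = λ^W I_c`, the map `T = W₀' ⊗ W₀ᵀÂW₀ + W₁' ⊗ W₁ᵀÂW₁` has
eigenvectors `e_k ⊗ u_i` with eigenvalues `(cos²(λᵢ/8)+λ^W sin²(λᵢ/8))(1−λᵢ)`. -/
theorem framelet_layer_spectrum (n c : ℕ) (Λ : Fin n → ℝ)
    (hΛ : ∀ i, Λ i ∈ Set.Icc (0 : ℝ) 2)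
    (U : Matrix (Fin n) (Fin n) ℝ) (hU : Uᵀ * U = 1) (hU' : U * Uᵀ = 1)
    (lamW : ℝ)
    (Ahat W0 W1 : Matrix (Fin n) (Fin n) ℝ)
    (hA : Ahat = Uᵀ * Matrix.diagonal (fun i => 1 - Λ i) * U)
    (hW0 : W0 = Uᵀ * Matrix.diagonal (fun i => Real.cos (Λ i / 8)) * U)
    (hW1 : W1 = Uᵀ * Matrix.diagonal (fun i => Real.sin (Λ i / 8)) * U)
    (T : Matrix (Fin c × Fin n) (Fin c × Fin n) ℝ)
    (hT : T = (1 : Matrix (Fin c) (Fin c) ℝ) ⊗ₖ (W0ᵀ * Ahat * W0)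
            + (lamW • (1 : Matrix (Fin c) (Fin c) ℝ)) ⊗ₖ (W1ᵀ * Ahat * W1)) :
    ∀ (k : Fin c) (i : Fin n),
      T.mulVec (fun p => (if p.1 = k then (1 : ℝ) else 0) * U i p.2)
        = ((Real.cos (Λ i / 8) ^ 2 + lamW * Real.sin (Λ i / 8) ^ 2) * (1 - Λ i)) •
            (fun p => (if p.1 = k then (1 : ℝ) else 0) * U i p.2) := by
  intro k i
  have sandwich : ∀ d : Fin n → ℝ,
      (Uᵀ * Matrix.diagonal d * U)ᵀ * Ahat * (Uᵀ * Matrix.diagonal d * U)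
        = Uᵀ * Matrix.diagonal (fun j => d j * ((1 - Λ j) * d j)) * U := by
    intro d
    rw [hA]
    rw [Matrix.transpose_mul, Matrix.transpose_mul, Matrix.diagonal_transpose,
      Matrix.transpose_transpose]
    rw [← Matrix.mul_assoc Uᵀ (Matrix.diagonal d) U]
    rw [conjSandwichMul U hU', conjSandwichMul U hU', Matrix.diagonal_mul_diagonal,
      Matrix.diagonal_mul_diagonal]
    simp only [mul_assoc]
  have h0 : W0ᵀ * Ahat * W0
      = Uᵀ * Matrix.diagonal
          (fun j => Real.cos (Λ j / 8) * ((1 - Λ j) * Real.cos (Λ j / 8))) * U := by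
    rw [hW0]; exact sandwich _
  have h1 : W1ᵀ * Ahat * W1
      = Uᵀ * Matrix.diagonal
          (fun j => Real.sin (Λ j / 8) * ((1 - Λ j) * Real.sin (Λ j / 8))) * U := by
    rw [hW1]; exact sandwich _
  rw [hT, Matrix.add_mulVec, h0, h1]
  rw [kron_mulVec (1 : Matrix (Fin c) (Fin c) ℝ) _ (fun a => if a = k then (1:ℝ) else 0)
    (fun b => U i b)]
  rw [kron_mulVec (lamW • (1 : Matrix (Fin c) (Fin c) ℝ)) _
    (fun a => if a = k then (1:ℝ) else 0) (fun b => U i b)]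
  rw [eig U hU' _ i, eig U hU' _ i]
  rw [Matrix.one_mulVec, Matrix.smul_mulVec, Matrix.one_mulVec]
  funext p
  simp only [Pi.add_apply, Pi.smul_apply, smul_eq_mul]
  ring
end

section
/- Let {W_k}_{k=0}^m with Σ_k W_kᵀW_k = Iₙ, Â symmetric, and symmetric weights W_k' ∈ ℝ^{c×c}, ε ∈ ℝ. Set Ω₀ = I_c + εW₀' and Ω_k = I_c − εW_k' for k ≥ 1 in the total framelet energy E^tot. Then the Euler step H' = H − ∇E^tot(H) with stepsize 1 equals H' = W₀ᵀ(Â − εIₙ)W₀ H W₀' + Σ_{k≥1} W_kᵀ(Â + εIₙ)W_k H W_k' (the linearized EE-UFG update). -/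
open Matrix

/-- EE-UFG as gradient flow: with `Ω₀ = I_c + εW₀'` and `Ω_k = I_c − εW_k'` for
`k ≥ 1`, the Euler step `H − ∇E^tot(H)` equals the linearized EE-UFG update
`W₀ᵀ(Â − εI)W₀ H W₀' + Σ_{k≥1} W_kᵀ(Â + εI)W_k H W_k'`. -/
theorem ee_ufg_is_gradient_flow_step (n c m : ℕ)
    (W : Fin (m + 1) → Matrix (Fin n) (Fin n) ℝ)
    (htight : ∑ k, (W k)ᵀ * W k = 1)
    (Ω W' : Fin (m + 1) → Matrix (Fin c) (Fin c) ℝ)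
    (hW's : ∀ k, (W' k).IsSymm)
    (Ahat : Matrix (Fin n) (Fin n) ℝ) (hA : Ahat.IsSymm)
    (ε : ℝ)
    (hΩ0 : Ω 0 = 1 + ε • W' 0)
    (hΩk : ∀ k, k ≠ 0 → Ω k = 1 - ε • W' k)
    (gradE : Matrix (Fin n) (Fin c) ℝ → Matrix (Fin n) (Fin c) ℝ)
    (hgrad : ∀ H, gradE H
      = ∑ k, ((W k)ᵀ * W k * H * Ω k - (W k)ᵀ * Ahat * W k * H * W' k)) :
    ∀ H : Matrix (Fin n) (Fin c) ℝ,
      H - gradE H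
        = (W 0)ᵀ * (Ahat - ε • (1 : Matrix (Fin n) (Fin n) ℝ)) * W 0 * H * W' 0
          + ∑ k ∈ Finset.univ.erase 0,
              (W k)ᵀ * (Ahat + ε • (1 : Matrix (Fin n) (Fin n) ℝ)) * W k * H * W' k := by
  intro H
  have hH : ∑ k, (W k)ᵀ * W k * H = H := by
    rw [← Matrix.sum_mul, htight, Matrix.one_mul]
  have hterm : ∀ k, (W k)ᵀ * W k * H * Ω k - (W k)ᵀ * Ahat * W k * H * W' k
      = (W k)ᵀ * W k * H
        - (if k = 0 then (W 0)ᵀ * (Ahat - ε • (1 : Matrix (Fin n) (Fin n) ℝ)) * W 0 * H * W' 0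
           else (W k)ᵀ * (Ahat + ε • (1 : Matrix (Fin n) (Fin n) ℝ)) * W k * H * W' k) := by
    intro k
    by_cases hk : k = 0
    · subst hk
      rw [hΩ0, if_pos rfl]
      simp only [Matrix.mul_add, Matrix.add_mul, Matrix.mul_sub, Matrix.sub_mul,
        Matrix.mul_smul, Matrix.smul_mul, Matrix.mul_one, Matrix.one_mul]
      abel
    · rw [hΩk k hk, if_neg hk]
      simp only [Matrix.mul_add, Matrix.add_mul, Matrix.mul_sub, Matrix.sub_mul,
        Matrix.mul_smul, Matrix.smul_mul, Matrix.mul_one, Matrix.one_mul]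
      abel
  rw [hgrad]
  simp only [hterm]
  rw [Finset.sum_sub_distrib, hH]
  rw [← Finset.add_sum_erase _ _ (Finset.mem_univ (0 : Fin (m + 1))), if_pos rfl]
  rw [Finset.sum_congr rfl (fun k hk => if_neg (Finset.ne_of_mem_erase hk))]
  abel
end
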